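/- For ξ ∈ (0,1), define K(ξ) = ∫₁^∞ (√((x-1+2ξ)(x+1)) - x - ξ)/√(x²-1) dx. Then K(ξ) is a well-defined (finite) real number and dK/dξ = -log ξ. -/

import Mathlib

open Real MeasureTheory

section Aux
open Set Filter

noncomputable def Gfun (η x : ℝ) : ℝ :=
  Real.sqrt ((x - 1) * (x - 1 + 2 * η))
    + 2 * η * Real.log (Real.sqrt (x - 1) + Real.sqrt (x - 1 + 2 * η))
    - Real.sqrt (x ^ 2 - 1) - η * Real.log (x + Real.sqrt (x ^ 2 - 1))

lemma G_deriv (η : ℝ) (hη : 0 < η) {x : ℝ} (hx : 1 < x) :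
    HasDerivAt (Gfun η)
      ((Real.sqrt ((x - 1 + 2 * η) * (x + 1)) - x - η) / Real.sqrt (x ^ 2 - 1)) x := by
  have hx1 : (0:ℝ) < x - 1 := by linarith
  have hx2 : (0:ℝ) < x - 1 + 2 * η := by linarith
  have hx3 : (0:ℝ) < x + 1 := by linarith
  have hw : (0:ℝ) < x ^ 2 - 1 := by nlinarith
  set s := Real.sqrt (x - 1) with hs_def
  set u := Real.sqrt (x - 1 + 2 * η) with hu_def
  set t := Real.sqrt (x + 1) with ht_def
  have hs : 0 < s := Real.sqrt_pos.mpr hx1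
  have hu : 0 < u := Real.sqrt_pos.mpr hx2
  have ht : 0 < t := Real.sqrt_pos.mpr hx3
  have hs2 : s ^ 2 = x - 1 := Real.sq_sqrt hx1.le
  have hu2 : u ^ 2 = x - 1 + 2 * η := Real.sq_sqrt hx2.le
  have ht2 : t ^ 2 = x + 1 := Real.sq_sqrt hx3.le
  have hwst : Real.sqrt (x ^ 2 - 1) = s * t := by
    rw [show x ^ 2 - 1 = (x - 1) * (x + 1) by ring, Real.sqrt_mul hx1.le]
  have hsu : Real.sqrt ((x - 1) * (x - 1 + 2 * η)) = s * u := Real.sqrt_mul hx1.le _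
  have hut : Real.sqrt ((x - 1 + 2 * η) * (x + 1)) = u * t := Real.sqrt_mul hx2.le _
  -- derivative of first term
  have d1inner : HasDerivAt (fun y : ℝ => (y - 1) * (y - 1 + 2 * η))
      (1 * (x - 1 + 2 * η) + (x - 1) * 1) x :=
    (((hasDerivAt_id x).sub_const 1)).mul (((hasDerivAt_id x).sub_const 1).add_const (2 * η))
  have d1 : HasDerivAt (fun y : ℝ => Real.sqrt ((y - 1) * (y - 1 + 2 * η)))
      ((1 * (x - 1 + 2 * η) + (x - 1) * 1) / (2 * Real.sqrt ((x - 1) * (x - 1 + 2 * η)))) x :=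
    d1inner.sqrt (ne_of_gt (mul_pos hx1 hx2))
  -- derivative of log term 1
  have dsq1 : HasDerivAt (fun y : ℝ => Real.sqrt (y - 1)) (1 / (2 * s)) x :=
    (((hasDerivAt_id x).sub_const 1)).sqrt (ne_of_gt hx1)
  have dsq2 : HasDerivAt (fun y : ℝ => Real.sqrt (y - 1 + 2 * η)) (1 / (2 * u)) x :=
    (((hasDerivAt_id x).sub_const 1).add_const (2 * η)).sqrt (ne_of_gt hx2)
  have d2 : HasDerivAt (fun y : ℝ => 2 * η * Real.log (Real.sqrt (y - 1) + Real.sqrt (y - 1 + 2 * η)))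
      (2 * η * ((1 / (2 * s) + 1 / (2 * u)) / (s + u))) x :=
    (((dsq1.add dsq2).log (ne_of_gt (add_pos hs hu))).const_mul (2 * η))
  -- derivative of sqrt(x^2-1)
  have dsqw : HasDerivAt (fun y : ℝ => Real.sqrt (y ^ 2 - 1)) ((2 * x) / (2 * (s * t))) x := by
    have : HasDerivAt (fun y : ℝ => y ^ 2 - 1) (2 * x) x := by
      simpa using (hasDerivAt_pow 2 x).sub_const 1
    simpa [hwst] using this.sqrt (ne_of_gt hw)
  have d3 : HasDerivAt (fun y : ℝ => Real.sqrt (y ^ 2 - 1)) ((2 * x) / (2 * (s * t))) x := dsqw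
  -- derivative of log term 2
  have d4 : HasDerivAt (fun y : ℝ => η * Real.log (y + Real.sqrt (y ^ 2 - 1)))
      (η * ((1 + (2 * x) / (2 * (s * t))) / (x + s * t))) x := by
    have hinner : HasDerivAt (fun y : ℝ => y + Real.sqrt (y ^ 2 - 1)) (1 + (2 * x) / (2 * (s * t))) x :=
      (hasDerivAt_id x).add dsqw
    have hne : x + Real.sqrt (x ^ 2 - 1) ≠ 0 := by
      rw [hwst]; positivity
    simpa [hwst] using (hinner.log (by rw [hwst] at hne ⊢; exact hne)).const_mul η
  have D := ((d1.add d2).sub d3).sub d4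
  have heq : (Real.sqrt ((x - 1 + 2 * η) * (x + 1)) - x - η) / Real.sqrt (x ^ 2 - 1)
      = (1 * (x - 1 + 2 * η) + (x - 1) * 1) / (2 * Real.sqrt ((x - 1) * (x - 1 + 2 * η)))
        + 2 * η * ((1 / (2 * s) + 1 / (2 * u)) / (s + u))
        - (2 * x) / (2 * (s * t)) - η * ((1 + (2 * x) / (2 * (s * t))) / (x + s * t)) := by
    rw [hwst, hsu, hut]
    have hxe : x = s ^ 2 + 1 := by linarith
    have hηe : η = (u ^ 2 - s ^ 2) / 2 := by linarith
    have hne : s ^ 2 + 1 + s * t ≠ 0 := by positivity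
    rw [hxe, hηe]
    field_simp
    ring
  rw [heq]
  exact D.congr_deriv rfl |>.congr_of_eventuallyEq (by
    filter_upwards [] with y
    simp [Gfun])

lemma G_tendsto (η : ℝ) (hη : 0 < η) :
    Tendsto (Gfun η) atTop (nhds (η - 1 + η * Real.log 2)) := by
  -- ratio limits
  have hbase : Tendsto (fun x : ℝ => x - 1) atTop atTop :=
    tendsto_atTop_add_const_right _ (-1) tendsto_id
  have hr : ∀ c : ℝ, Tendsto (fun x : ℝ => (x - 1 + c) / (x - 1)) atTop (nhds 1) := by
    intro c
    have h0 : Tendsto (fun x : ℝ => c / (x - 1)) atTop (nhds 0) :=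
      Tendsto.div_atTop tendsto_const_nhds hbase
    have : Tendsto (fun x : ℝ => 1 + c / (x - 1)) atTop (nhds (1 + 0)) :=
      tendsto_const_nhds.add h0
    rw [add_zero] at this
    refine this.congr' ?_
    filter_upwards [eventually_gt_atTop (1:ℝ)] with x hx
    have : x - 1 ≠ 0 := by linarith
    field_simp
  have hsr : ∀ c : ℝ, 0 ≤ c → Tendsto (fun x : ℝ => Real.sqrt (x - 1 + c) / Real.sqrt (x - 1))
      atTop (nhds 1) := by
    intro c hc
    have := (Real.continuous_sqrt.tendsto 1).comp (hr c)
    rw [Real.sqrt_one] at this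
    refine this.congr' ?_
    filter_upwards [eventually_gt_atTop (1:ℝ)] with x hx
    simp only [Function.comp]
    rw [Real.sqrt_div (by linarith)]
  have hu1 : Tendsto (fun x : ℝ => Real.sqrt (x - 1 + 2 * η) / Real.sqrt (x - 1)) atTop (nhds 1) :=
    hsr (2 * η) (by linarith)
  have ht1 : Tendsto (fun x : ℝ => Real.sqrt (x + 1) / Real.sqrt (x - 1)) atTop (nhds 1) := by
    have := hsr 2 (by norm_num)
    refine this.congr ?_
    intro x; ring_nf
  -- piece 1 : s/(u+t) → 1/2
  have hp1 : Tendsto (fun x : ℝ =>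
      Real.sqrt (x - 1) / (Real.sqrt (x - 1 + 2 * η) + Real.sqrt (x + 1))) atTop (nhds 2⁻¹) := by
    have hsum : Tendsto (fun x : ℝ =>
        (Real.sqrt (x - 1 + 2 * η) / Real.sqrt (x - 1) + Real.sqrt (x + 1) / Real.sqrt (x - 1)))
        atTop (nhds 2) := by
      have := hu1.add ht1; norm_num at this; exact this
    have := hsum.inv₀ (by norm_num)
    refine this.congr' ?_
    filter_upwards [eventually_gt_atTop (1:ℝ)] with x hx
    have hs : 0 < Real.sqrt (x - 1) := Real.sqrt_pos.mpr (by linarith)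
    have hu : 0 < Real.sqrt (x - 1 + 2 * η) := Real.sqrt_pos.mpr (by linarith)
    have ht : 0 < Real.sqrt (x + 1) := Real.sqrt_pos.mpr (by linarith)
    field_simp
  -- piece 2 : log((s+u)/(s+t)) → 0
  have hp2 : Tendsto (fun x : ℝ =>
      Real.log ((Real.sqrt (x - 1) + Real.sqrt (x - 1 + 2 * η)) /
        (Real.sqrt (x - 1) + Real.sqrt (x + 1)))) atTop (nhds 0) := by
    have hratio : Tendsto (fun x : ℝ =>
        (Real.sqrt (x - 1) + Real.sqrt (x - 1 + 2 * η)) /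
          (Real.sqrt (x - 1) + Real.sqrt (x + 1))) atTop (nhds 1) := by
      have hnum : Tendsto (fun x : ℝ =>
          (1 + Real.sqrt (x - 1 + 2 * η) / Real.sqrt (x - 1)) /
          (1 + Real.sqrt (x + 1) / Real.sqrt (x - 1))) atTop (nhds 1) := by
        have hA : Tendsto (fun x : ℝ => 1 + Real.sqrt (x - 1 + 2 * η) / Real.sqrt (x - 1))
            atTop (nhds (1 + 1)) := tendsto_const_nhds.add hu1
        have hB : Tendsto (fun x : ℝ => 1 + Real.sqrt (x + 1) / Real.sqrt (x - 1))
            atTop (nhds (1 + 1)) := tendsto_const_nhds.add ht1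
        have := hA.div hB (by norm_num : (1:ℝ) + 1 ≠ 0)
        norm_num at this; exact this
      refine hnum.congr' ?_
      filter_upwards [eventually_gt_atTop (1:ℝ)] with x hx
      have hs : (0:ℝ) < Real.sqrt (x - 1) := Real.sqrt_pos.mpr (by linarith)
      have hu : (0:ℝ) < Real.sqrt (x - 1 + 2 * η) := Real.sqrt_pos.mpr (by linarith)
      have ht : (0:ℝ) < Real.sqrt (x + 1) := Real.sqrt_pos.mpr (by linarith)
      have h1 : Real.sqrt (x - 1) ≠ 0 := ne_of_gt hs
      have h2 : Real.sqrt (x - 1) + Real.sqrt (x + 1) ≠ 0 := by positivity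
      field_simp
    have := (Real.continuousAt_log one_ne_zero).tendsto.comp hratio
    rw [Real.log_one] at this
    exact this
  -- combine
  have hlim : Tendsto (fun x : ℝ =>
      (2 * η - 2) * (Real.sqrt (x - 1) / (Real.sqrt (x - 1 + 2 * η) + Real.sqrt (x + 1)))
      + 2 * η * Real.log ((Real.sqrt (x - 1) + Real.sqrt (x - 1 + 2 * η)) /
          (Real.sqrt (x - 1) + Real.sqrt (x + 1)))
      + η * Real.log 2) atTop
      (nhds ((2 * η - 2) * 2⁻¹ + 2 * η * 0 + η * Real.log 2)) :=
    ((tendsto_const_nhds.mul hp1).add (tendsto_const_nhds.mul hp2)).add tendsto_const_nhds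
  have : (2 * η - 2) * 2⁻¹ + 2 * η * 0 + η * Real.log 2 = η - 1 + η * Real.log 2 := by ring
  rw [this] at hlim
  refine hlim.congr' ?_
  filter_upwards [eventually_gt_atTop (1:ℝ)] with x hx
  symm
  have hx1 : (0:ℝ) < x - 1 := by linarith
  have hx2 : (0:ℝ) < x - 1 + 2 * η := by linarith
  have hx3 : (0:ℝ) < x + 1 := by linarith
  simp only [Gfun]
  set s := Real.sqrt (x - 1)
  set u := Real.sqrt (x - 1 + 2 * η)
  set t := Real.sqrt (x + 1)
  have hs : 0 < s := Real.sqrt_pos.mpr hx1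
  have hu : 0 < u := Real.sqrt_pos.mpr hx2
  have ht : 0 < t := Real.sqrt_pos.mpr hx3
  have hs2 : s ^ 2 = x - 1 := Real.sq_sqrt hx1.le
  have hu2 : u ^ 2 = x - 1 + 2 * η := Real.sq_sqrt hx2.le
  have ht2 : t ^ 2 = x + 1 := Real.sq_sqrt hx3.le
  have hwst : Real.sqrt (x ^ 2 - 1) = s * t := by
    rw [show x ^ 2 - 1 = (x - 1) * (x + 1) by ring, Real.sqrt_mul hx1.le]
  have hsu : Real.sqrt ((x - 1) * (x - 1 + 2 * η)) = s * u := Real.sqrt_mul hx1.le _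
  -- log(x + st) = 2 log(s+t) - log 2
  have hxst : x + s * t = (s + t) ^ 2 / 2 := by nlinarith
  have hlog2 : Real.log (x + Real.sqrt (x ^ 2 - 1)) = 2 * Real.log (s + t) - Real.log 2 := by
    rw [hwst, hxst, Real.log_div (by positivity) two_ne_zero, Real.log_pow]
    push_cast; ring
  have hlogdiv : Real.log ((s + u) / (s + t)) = Real.log (s + u) - Real.log (s + t) :=
    Real.log_div (by positivity) (by positivity)
  -- s*u - s*t = (2η-2) * (s/(u+t))
  have hut0 : u + t ≠ 0 := by positivity
  have hsut : s * u - s * t = (2 * η - 2) * (s / (u + t)) := by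
    rw [show (2 * η - 2) = u ^ 2 - t ^ 2 by linarith]
    field_simp
    ring
  calc Real.sqrt ((x - 1) * (x - 1 + 2 * η)) + 2 * η * Real.log (s + u)
        - Real.sqrt (x ^ 2 - 1) - η * Real.log (x + Real.sqrt (x ^ 2 - 1))
      = s * u + 2 * η * Real.log (s + u) - s * t
        - η * (2 * Real.log (s + t) - Real.log 2) := by
        rw [hlog2, hsu, hwst]
    _ = (s * u - s * t) + 2 * η * ((Real.log (s + u) - Real.log (s + t))) + η * Real.log 2 := by ring
    _ = (2 * η - 2) * (s / (u + t)) + 2 * η * Real.log ((s + u) / (s + t)) + η * Real.log 2 := by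
        rw [hsut, hlogdiv]

lemma G_cont (η : ℝ) (hη : 0 < η) : ContinuousAt (Gfun η) 1 := by
  have c1 : ContinuousAt (fun x : ℝ => Real.sqrt ((x - 1) * (x - 1 + 2 * η))) 1 :=
    (Real.continuous_sqrt.comp (by fun_prop)).continuousAt
  have cin : ContinuousAt (fun x : ℝ => Real.sqrt (x - 1) + Real.sqrt (x - 1 + 2 * η)) 1 :=
    ((Real.continuous_sqrt.comp (by fun_prop)).add
      (Real.continuous_sqrt.comp (by fun_prop))).continuousAt
  have c2 : ContinuousAt (fun x : ℝ => 2 * η *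
      Real.log (Real.sqrt (x - 1) + Real.sqrt (x - 1 + 2 * η))) 1 := by
    refine continuousAt_const.mul (ContinuousAt.log cin ?_)
    have : (0:ℝ) < Real.sqrt (1 - 1) + Real.sqrt (1 - 1 + 2 * η) := by
      have : (0:ℝ) < Real.sqrt (1 - 1 + 2 * η) := Real.sqrt_pos.mpr (by linarith)
      positivity
    exact ne_of_gt this
  have c3 : ContinuousAt (fun x : ℝ => Real.sqrt (x ^ 2 - 1)) 1 :=
    (Real.continuous_sqrt.comp (by fun_prop)).continuousAt
  have c4 : ContinuousAt (fun x : ℝ => η * Real.log (x + Real.sqrt (x ^ 2 - 1))) 1 := by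
    refine continuousAt_const.mul (ContinuousAt.log ?_ ?_)
    · exact (continuous_id.add (Real.continuous_sqrt.comp (by fun_prop))).continuousAt
    · norm_num
  exact ((c1.add c2).sub c3).sub c4

lemma G_one (η : ℝ) (hη : 0 < η) : Gfun η 1 = η * Real.log (2 * η) := by
  have h2η : (0:ℝ) ≤ 2 * η := by linarith
  simp only [Gfun]
  norm_num
  rw [← Real.sqrt_mul (by norm_num : (0:ℝ) ≤ 2), Real.log_sqrt h2η]
  ring

lemma f_nonpos (η : ℝ) (hη : 0 < η) {x : ℝ} (hx : 1 < x) :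
    (Real.sqrt ((x - 1 + 2 * η) * (x + 1)) - x - η) / Real.sqrt (x ^ 2 - 1) ≤ 0 := by
  have hw : (0:ℝ) < x ^ 2 - 1 := by nlinarith
  apply div_nonpos_of_nonpos_of_nonneg _ (Real.sqrt_nonneg _)
  have h1 : (x - 1 + 2 * η) * (x + 1) ≤ (x + η) ^ 2 := by nlinarith [sq_nonneg (1 - η)]
  have h2 : Real.sqrt ((x - 1 + 2 * η) * (x + 1)) ≤ x + η := by
    calc Real.sqrt ((x - 1 + 2 * η) * (x + 1)) ≤ Real.sqrt ((x + η) ^ 2) := Real.sqrt_le_sqrt h1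
      _ = x + η := Real.sqrt_sq (by linarith)
  linarith

lemma key_lemma (η : ℝ) (hη : 0 < η) :
    IntegrableOn
      (fun x => (Real.sqrt ((x - 1 + 2 * η) * (x + 1)) - x - η) / Real.sqrt (x ^ 2 - 1))
      (Set.Ioi (1 : ℝ)) ∧
    (∫ x in Set.Ioi (1 : ℝ),
        (Real.sqrt ((x - 1 + 2 * η) * (x + 1)) - x - η) / Real.sqrt (x ^ 2 - 1))
      = η - 1 - η * Real.log η := by
  set f : ℝ → ℝ := fun x =>
    (Real.sqrt ((x - 1 + 2 * η) * (x + 1)) - x - η) / Real.sqrt (x ^ 2 - 1) with hf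
  have hcont : ContinuousWithinAt (fun y => -Gfun η y) (Set.Ici 1) 1 :=
    ((G_cont η hη).neg).continuousWithinAt
  have hderiv : ∀ x ∈ Set.Ioi (1:ℝ), HasDerivAt (fun y => -Gfun η y) (-f x) x :=
    fun x hx => (G_deriv η hη hx).neg
  have hnn : ∀ x ∈ Set.Ioi (1:ℝ), 0 ≤ -f x := fun x hx => neg_nonneg.mpr (f_nonpos η hη hx)
  have htd : Tendsto (fun y => -Gfun η y) atTop (nhds (-(η - 1 + η * Real.log 2))) :=
    (G_tendsto η hη).neg
  have hint : IntegrableOn (fun x => -f x) (Set.Ioi (1:ℝ)) :=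
    integrableOn_Ioi_deriv_of_nonneg hcont hderiv hnn htd
  have hint' : IntegrableOn f (Set.Ioi (1:ℝ)) := by
    have h2 := hint.neg
    have : (-fun x => -f x) = f := by funext x; simp
    rwa [this] at h2
  refine ⟨hint', ?_⟩
  have hval : (∫ x in Set.Ioi (1:ℝ), -f x) = -(η - 1 + η * Real.log 2) - -Gfun η 1 :=
    integral_Ioi_of_hasDerivAt_of_nonneg hcont hderiv hnn htd
  have hInt : (∫ x in Set.Ioi (1:ℝ), f x) = (η - 1 + η * Real.log 2) - Gfun η 1 := by
    rw [integral_neg] at hval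
    linarith
  rw [hf] at hInt
  rw [hInt, G_one η hη, Real.log_mul two_ne_zero (ne_of_gt hη)]
  ring

end Aux

/-- For `ξ ∈ (0,1)`, `K(ξ) = ∫₁^∞ (√((x-1+2ξ)(x+1)) - x - ξ)/√(x²-1) dx` is a well-defined
(finite) real number and `K'(ξ) = -log ξ`. -/
theorem stmt_2 (ξ : ℝ) (hξ : ξ ∈ Set.Ioo 0 1)
    (K : ℝ → ℝ)
    (hK : ∀ η, K η =
      ∫ x in Set.Ioi (1 : ℝ),
        (Real.sqrt ((x - 1 + 2 * η) * (x + 1)) - x - η) / Real.sqrt (x ^ 2 - 1)) :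
    IntegrableOn
        (fun x => (Real.sqrt ((x - 1 + 2 * ξ) * (x + 1)) - x - ξ) / Real.sqrt (x ^ 2 - 1))
        (Set.Ioi (1 : ℝ)) ∧
      HasDerivAt K (-Real.log ξ) ξ := by
  obtain ⟨hξ0, hξ1⟩ := hξ
  refine ⟨(key_lemma ξ hξ0).1, ?_⟩
  have hmodel : HasDerivAt (fun η : ℝ => η - 1 - η * Real.log η) (-Real.log ξ) ξ := by
    have h1 : HasDerivAt (fun η : ℝ => η - 1) 1 ξ := (hasDerivAt_id ξ).sub_const 1
    have h2 : HasDerivAt (fun η : ℝ => η * Real.log η) (Real.log ξ + 1) ξ :=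
      Real.hasDerivAt_mul_log (ne_of_gt hξ0)
    have := h1.sub h2
    exact this.congr_deriv (by ring)
  refine hmodel.congr_of_eventuallyEq ?_
  have hmem : Set.Ioi (0:ℝ) ∈ nhds ξ := Ioi_mem_nhds hξ0
  filter_upwards [hmem] with η hη
  rw [hK η, (key_lemma η hη).2]
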